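/- For positive definite complex n×n matrices A and arbitrary complex n×n matrices B, the map (A, B) ↦ B* A⁻¹ B is jointly convex: for A₁, A₂ positive definite, B₁, B₂ arbitrary, and λ ∈ [0,1], one has (λB₁+(1-λ)B₂)* (λA₁+(1-λ)A₂)⁻¹ (λB₁+(1-λ)B₂) ≤ λ B₁* A₁⁻¹ B₁ + (1-λ) B₂* A₂⁻¹ B₂ in the Loewner order. -/

import Mathlib

open Matrix ComplexOrder

lemma psd_real_smul {m : Type*} [Fintype m] {M : Matrix m m ℂ} (hM : M.PosSemidef) {c : ℝ}
    (hc : 0 ≤ c) : (c • M).PosSemidef := by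
  exact hM.smul hc

lemma pd_real_smul {m : Type*} [Fintype m] {M : Matrix m m ℂ} (hM : M.PosDef) {c : ℝ}
    (hc : 0 < c) : (c • M).PosDef := by
  exact hM.smul hc

/-- Joint convexity of `(A, B) ↦ Bᴴ A⁻¹ B` in the Loewner order. -/
theorem jointly_convex_conj_inv {n : ℕ} (A₁ A₂ B₁ B₂ : Matrix (Fin n) (Fin n) ℂ)
    (hA₁ : A₁.PosDef) (hA₂ : A₂.PosDef) (l : ℝ) (hl0 : 0 ≤ l) (hl1 : l ≤ 1) :
    (l • (B₁ᴴ * A₁⁻¹ * B₁) + (1 - l) • (B₂ᴴ * A₂⁻¹ * B₂) -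
      (l • B₁ + (1 - l) • B₂)ᴴ * (l • A₁ + (1 - l) • A₂)⁻¹ *
        (l • B₁ + (1 - l) • B₂)).PosSemidef := by
  letI := hA₁.isUnit.invertible
  letI := hA₂.isUnit.invertible
  have hA : (l • A₁ + (1 - l) • A₂).PosDef := by
    rcases hl0.eq_or_lt with h | h
    · rw [← h, zero_smul, sub_zero, one_smul, zero_add]
      exact hA₂
    · exact Matrix.PosDef.add_posSemidef (pd_real_smul hA₁ h)
        (psd_real_smul hA₂.posSemidef (by linarith))
  letI := hA.isUnit.invertible
  have hM₁ : (fromBlocks A₁ B₁ B₁ᴴ (B₁ᴴ * A₁⁻¹ * B₁)).PosSemidef := by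
    rw [Matrix.PosDef.fromBlocks₁₁ B₁ _ hA₁, sub_self]
    exact Matrix.PosSemidef.zero
  have hM₂ : (fromBlocks A₂ B₂ B₂ᴴ (B₂ᴴ * A₂⁻¹ * B₂)).PosSemidef := by
    rw [Matrix.PosDef.fromBlocks₁₁ B₂ _ hA₂, sub_self]
    exact Matrix.PosSemidef.zero
  have hM : (fromBlocks (l • A₁ + (1 - l) • A₂) (l • B₁ + (1 - l) • B₂)
      (l • B₁ + (1 - l) • B₂)ᴴ
      (l • (B₁ᴴ * A₁⁻¹ * B₁) + (1 - l) • (B₂ᴴ * A₂⁻¹ * B₂))).PosSemidef := by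
    have key : fromBlocks (l • A₁ + (1 - l) • A₂) (l • B₁ + (1 - l) • B₂)
        (l • B₁ + (1 - l) • B₂)ᴴ
        (l • (B₁ᴴ * A₁⁻¹ * B₁) + (1 - l) • (B₂ᴴ * A₂⁻¹ * B₂)) =
        l • fromBlocks A₁ B₁ B₁ᴴ (B₁ᴴ * A₁⁻¹ * B₁) +
        (1 - l) • fromBlocks A₂ B₂ B₂ᴴ (B₂ᴴ * A₂⁻¹ * B₂) := by
      rw [fromBlocks_smul, fromBlocks_smul, fromBlocks_add]
      rw [conjTranspose_add, conjTranspose_smul, conjTranspose_smul, star_trivial,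
        star_trivial]
    rw [key]
    exact (psd_real_smul hM₁ hl0).add (psd_real_smul hM₂ (by linarith))
  rw [Matrix.PosDef.fromBlocks₁₁ _ _ hA] at hM
  exact hM
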